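/- Let T ∈ B_A(H) and let P = (T + T^{#_A})/2 and Q = (T − T^{#_A})/(2i) (so that T = P + iQ is the A-Cartesian decomposition of T). Then (1/2)·w_A(T) ≤ min{ w_𝔸([[P, Q],[O, O]]), w_𝔸([[O, P],[Q, O]]) }. -/

import Mathlib

noncomputable section

open ContinuousLinearMap

/-- The semi-inner product induced by a positive operator `A`: `⟪x, y⟫_A = ⟪A x, y⟫`. -/
def sInnerA {E : Type*} [NormedAddCommGroup E] [InnerProductSpace ℂ E]
    (A : E →L[ℂ] E) (x y : E) : ℂ :=
  inner ℂ (A x) y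

/-- The seminorm induced by `A`: `‖x‖_A = √(re ⟪A x, x⟫)`. -/
def sNormA {E : Type*} [NormedAddCommGroup E] [InnerProductSpace ℂ E]
    (A : E →L[ℂ] E) (x : E) : ℝ :=
  Real.sqrt (sInnerA A x x).re

/-- The `A`-operator seminorm: `sup {‖T x‖_A : x ∈ closure (range A), ‖x‖_A = 1}`. -/
def opNormA {E : Type*} [NormedAddCommGroup E] [InnerProductSpace ℂ E]
    (A T : E →L[ℂ] E) : ℝ :=
  sSup {r | ∃ x ∈ closure (Set.range A), sNormA A x = 1 ∧ r = sNormA A (T x)}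

/-- The `A`-numerical radius: `sup {|⟪T x, x⟫_A| : ‖x‖_A = 1}`. -/
def wA {E : Type*} [NormedAddCommGroup E] [InnerProductSpace ℂ E]
    (A T : E →L[ℂ] E) : ℝ :=
  sSup {r | ∃ x, sNormA A x = 1 ∧ r = ‖sInnerA A (T x) x‖}

/-- The `A`-Crawford number: `inf {|⟪T x, x⟫_A| : ‖x‖_A = 1}`. -/
def cA {E : Type*} [NormedAddCommGroup E] [InnerProductSpace ℂ E]
    (A T : E →L[ℂ] E) : ℝ :=
  sInf {r | ∃ x, sNormA A x = 1 ∧ r = ‖sInnerA A (T x) x‖}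

/-- `T ∈ B_A(H)`, i.e. the range of `T* A` is contained in the range of `A`. -/
def memBA {E : Type*} [NormedAddCommGroup E] [InnerProductSpace ℂ E] [CompleteSpace E]
    (A T : E →L[ℂ] E) : Prop :=
  Set.range ((adjoint T) ∘L A) ⊆ Set.range A

/-- `S` is the distinguished `A`-adjoint `T^{#_A}` of `T`:
`A ∘ S = T* ∘ A` and `R(S) ⊆ closure (R(A))`. -/
def IsSharpA {E : Type*} [NormedAddCommGroup E] [InnerProductSpace ℂ E] [CompleteSpace E]
    (A T S : E →L[ℂ] E) : Prop :=
  A ∘L S = (adjoint T) ∘L A ∧ Set.range S ⊆ closure (Set.range A)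

/-- The `2 × 2` operator matrix `[[X, Y], [Z, W]]` acting blockwise on
the Hilbert space direct sum `H ⊕ H`. -/
def blk2 {H : Type*} [NormedAddCommGroup H] [InnerProductSpace ℂ H]
    (X Y Z W : H →L[ℂ] H) : WithLp 2 (H × H) →L[ℂ] WithLp 2 (H × H) :=
  ((WithLp.prodContinuousLinearEquiv 2 ℂ H H).symm : (H × H) →L[ℂ] WithLp 2 (H × H)) ∘L
    ((X ∘L ContinuousLinearMap.fst ℂ H H + Y ∘L ContinuousLinearMap.snd ℂ H H).prod
      (Z ∘L ContinuousLinearMap.fst ℂ H H + W ∘L ContinuousLinearMap.snd ℂ H H)) ∘L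
    ((WithLp.prodContinuousLinearEquiv 2 ℂ H H) : WithLp 2 (H × H) →L[ℂ] H × H)


section AuxCS
variable {H : Type*} [NormedAddCommGroup H] [InnerProductSpace ℂ H] [CompleteSpace H]

private def coreA (A : H →L[ℂ] H) (hA : A.IsPositive) : PreInnerProductSpace.Core ℂ H where
  inner x y := inner ℂ (A x) y
  conj_inner_symm x y := by
    rw [inner_conj_symm, ← ContinuousLinearMap.adjoint_inner_left, hA.isSelfAdjoint.adjoint_eq]
  re_inner_nonneg x := hA.2 x
  add_left x y z := by simp [inner_add_left]
  smul_left x y r := by simp [inner_smul_left, mul_comm]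

private lemma nA_sq (A : H →L[ℂ] H) (hA : A.IsPositive) (x : H) :
    sNormA A x ^ 2 = (inner ℂ (A x) x : ℂ).re := Real.sq_sqrt (hA.2 x)

private lemma nA_nonneg (A : H →L[ℂ] H) (x : H) : 0 ≤ sNormA A x := Real.sqrt_nonneg _

private lemma csA (A : H →L[ℂ] H) (hA : A.IsPositive) (x y : H) :
    ‖(inner ℂ (A x) y : ℂ)‖ ≤ sNormA A x * sNormA A y := by
  have h : ‖(inner ℂ (A x) y : ℂ)‖ * ‖(inner ℂ (A y) x : ℂ)‖ ≤
      (inner ℂ (A x) x : ℂ).re * (inner ℂ (A y) y : ℂ).re :=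
    @InnerProductSpace.Core.inner_mul_inner_self_le ℂ H _ _ _ (coreA A hA) x y
  have hsym : ‖(inner ℂ (A y) x : ℂ)‖ = ‖(inner ℂ (A x) y : ℂ)‖ := by
    rw [← inner_conj_symm, ← ContinuousLinearMap.adjoint_inner_left, hA.isSelfAdjoint.adjoint_eq,
      RCLike.norm_conj]
  rw [hsym] at h
  have h1 := nA_sq A hA x
  have h2 := nA_sq A hA y
  nlinarith [nA_nonneg A x, nA_nonneg A y, norm_nonneg (inner ℂ (A x) y : ℂ),
    mul_nonneg (nA_nonneg A x) (nA_nonneg A y)]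

private lemma reA_le (A : H →L[ℂ] H) (hA : A.IsPositive) (x y : H) :
    (inner ℂ (A x) y : ℂ).re ≤ sNormA A x * sNormA A y :=
  le_trans (Complex.re_le_norm _) (csA A hA x y)

private lemma nA_add (A : H →L[ℂ] H) (hA : A.IsPositive) (x y : H) :
    sNormA A (x + y) ≤ sNormA A x + sNormA A y := by
  have hre : (inner ℂ (A (x + y)) (x + y) : ℂ).re
      = (inner ℂ (A x) x : ℂ).re + (inner ℂ (A x) y : ℂ).re
        + (inner ℂ (A y) x : ℂ).re + (inner ℂ (A y) y : ℂ).re := by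
    simp [inner_add_left, inner_add_right, map_add]; ring
  have hs : (inner ℂ (A y) x : ℂ).re = (inner ℂ (A x) y : ℂ).re := by
    rw [← inner_conj_symm, ← ContinuousLinearMap.adjoint_inner_left, hA.isSelfAdjoint.adjoint_eq,
      Complex.conj_re]
  have h1 := nA_sq A hA x
  have h2 := nA_sq A hA y
  have h3 := nA_sq A hA (x + y)
  have h4 := reA_le A hA x y
  nlinarith [nA_nonneg A x, nA_nonneg A y, nA_nonneg A (x + y)]

private lemma nA_smul (A : H →L[ℂ] H) (c : ℂ) (x : H) :
    sNormA A (c • x) = ‖c‖ * sNormA A x := by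
  unfold sNormA sInnerA
  have h : (inner ℂ (A (c • x)) (c • x) : ℂ) = ((‖c‖ ^ 2 : ℝ) : ℂ) * inner ℂ (A x) x := by
    rw [map_smul, inner_smul_left, inner_smul_right, ← mul_assoc]
    congr 1
    rw [mul_comm, Complex.mul_conj, Complex.normSq_eq_norm_sq]
  rw [h, Complex.re_ofReal_mul, Real.sqrt_mul (by positivity), Real.sqrt_sq (norm_nonneg c)]

private lemma nA_le_norm (A : H →L[ℂ] H) (hA : A.IsPositive) (x : H) :
    sNormA A x ≤ Real.sqrt ‖A‖ * ‖x‖ := by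
  have h : (inner ℂ (A x) x : ℂ).re ≤ ‖A‖ * ‖x‖ ^ 2 := by
    calc (inner ℂ (A x) x : ℂ).re ≤ ‖(inner ℂ (A x) x : ℂ)‖ := Complex.re_le_norm _
      _ ≤ ‖A x‖ * ‖x‖ := norm_inner_le_norm _ _
      _ ≤ ‖A‖ * ‖x‖ * ‖x‖ := by gcongr; exact A.le_opNorm x
      _ = ‖A‖ * ‖x‖ ^ 2 := by ring
  unfold sNormA sInnerA
  calc Real.sqrt (inner ℂ (A x) x : ℂ).re ≤ Real.sqrt (‖A‖ * ‖x‖ ^ 2) := Real.sqrt_le_sqrt h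
    _ = Real.sqrt ‖A‖ * ‖x‖ := by
        rw [Real.sqrt_mul (norm_nonneg A), Real.sqrt_sq (norm_nonneg x)]
end AuxCS

section AuxIter
variable {H : Type*} [NormedAddCommGroup H] [InnerProductSpace ℂ H] [CompleteSpace H]

private lemma pow_sa (A W : H →L[ℂ] H) (hW : A ∘L W = adjoint W ∘L A) (m : ℕ) :
    A ∘L W ^ m = adjoint (W ^ m) ∘L A := by
  induction m with
  | zero =>
    rw [pow_zero]
    have h1 : (1 : H →L[ℂ] H) = ContinuousLinearMap.id ℂ H := rfl
    rw [h1, ContinuousLinearMap.adjoint_id]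
    rfl
  | succ n ih =>
    have h1 : W ^ (n + 1) = W ∘L W ^ n := by rw [pow_succ']; rfl
    have h2 : W ^ (n + 1) = (W ^ n) ∘L W := by rw [pow_succ]; rfl
    have h3 : A ∘L W ^ (n + 1) = adjoint W ∘L (adjoint (W ^ n) ∘L A) := by
      rw [h1, ← ContinuousLinearMap.comp_assoc, hW, ContinuousLinearMap.comp_assoc, ih]
    rw [h3, ← ContinuousLinearMap.comp_assoc, ← ContinuousLinearMap.adjoint_comp, ← h2]

private lemma iterA (A W : H →L[ℂ] H) (hA : A.IsPositive)
    (hW : A ∘L W = adjoint W ∘L A) (m : ℕ) (u : H) :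
    sNormA A ((W ^ m) u) ^ 2 ≤ sNormA A u * sNormA A ((W ^ (2 * m)) u) := by
  have h1 : A ((W ^ m) u) = adjoint (W ^ m) (A u) := by
    have := congrArg (fun S : H →L[ℂ] H => S u) (pow_sa A W hW m)
    simpa using this
  have h2 : (W ^ m) ((W ^ m) u) = (W ^ (2 * m)) u := by
    rw [two_mul, pow_add]; rfl
  rw [nA_sq A hA]
  calc (inner ℂ (A ((W ^ m) u)) ((W ^ m) u) : ℂ).re
      = (inner ℂ (A u) ((W ^ (2 * m)) u) : ℂ).re := by
        rw [h1, ContinuousLinearMap.adjoint_inner_left, h2]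
    _ ≤ ‖(inner ℂ (A u) ((W ^ (2 * m)) u) : ℂ)‖ := Complex.re_le_norm _
    _ ≤ _ := csA A hA _ _

private lemma key_bound (A W : H →L[ℂ] H) (hA : A.IsPositive)
    (hW : A ∘L W = adjoint W ∘L A) (u : H) :
    sNormA A (W u) ≤ ‖W‖ * sNormA A u := by
  set K : ℝ := Real.sqrt ‖A‖ * ‖u‖ with hKdef
  have hK : 0 ≤ K := mul_nonneg (Real.sqrt_nonneg _) (norm_nonneg _)
  have base : ∀ m : ℕ, 1 ≤ m → sNormA A ((W ^ m) u) ≤ ‖W‖ ^ m * K := by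
    intro m hm
    calc sNormA A ((W ^ m) u) ≤ Real.sqrt ‖A‖ * ‖(W ^ m) u‖ := nA_le_norm A hA _
      _ ≤ Real.sqrt ‖A‖ * (‖W ^ m‖ * ‖u‖) :=
          mul_le_mul_of_nonneg_left ((W ^ m).le_opNorm u) (Real.sqrt_nonneg _)
      _ ≤ Real.sqrt ‖A‖ * (‖W‖ ^ m * ‖u‖) :=
          mul_le_mul_of_nonneg_left
            (mul_le_mul_of_nonneg_right (norm_pow_le' W hm) (norm_nonneg u))
            (Real.sqrt_nonneg _)
      _ = ‖W‖ ^ m * K := by rw [hKdef]; ring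
  have claim : ∀ n m : ℕ, 1 ≤ m →
      sNormA A ((W ^ m) u) ^ (2 ^ n) ≤ ‖W‖ ^ (m * 2 ^ n) * sNormA A u ^ (2 ^ n - 1) * K := by
    intro n
    induction n with
    | zero => intro m hm; simpa using base m hm
    | succ n ih =>
      intro m hm
      have e1 : (2 : ℕ) ^ (n + 1) = 2 ^ n * 2 := by ring
      have h2n : 1 ≤ 2 ^ n := Nat.one_le_two_pow
      calc sNormA A ((W ^ m) u) ^ 2 ^ (n + 1)
          = (sNormA A ((W ^ m) u) ^ 2) ^ 2 ^ n := by rw [← pow_mul, e1, mul_comm]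
        _ ≤ (sNormA A u * sNormA A ((W ^ (2 * m)) u)) ^ 2 ^ n := by
            apply pow_le_pow_left₀ (sq_nonneg _) (iterA A W hA hW m u)
        _ = sNormA A u ^ 2 ^ n * sNormA A ((W ^ (2 * m)) u) ^ 2 ^ n := mul_pow _ _ _
        _ ≤ sNormA A u ^ 2 ^ n * (‖W‖ ^ (2 * m * 2 ^ n) * sNormA A u ^ (2 ^ n - 1) * K) := by
            apply mul_le_mul_of_nonneg_left (ih (2 * m) (by omega))
            exact pow_nonneg (nA_nonneg A u) _
        _ = ‖W‖ ^ (m * 2 ^ (n + 1)) * sNormA A u ^ (2 ^ (n + 1) - 1) * K := by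
            rw [show m * 2 ^ (n + 1) = 2 * m * 2 ^ n by ring,
              show (2 : ℕ) ^ (n + 1) - 1 = 2 ^ n + (2 ^ n - 1) by omega, pow_add]
            ring
  by_contra hcon
  push_neg at hcon
  have hd : 0 ≤ ‖W‖ * sNormA A u := mul_nonneg (norm_nonneg _) (nA_nonneg A u)
  set e : ℝ := ‖W‖ * sNormA A u with hedef
  set d : ℝ := sNormA A (W u) with hddef
  have hdpos : 0 < d := lt_of_le_of_lt hd hcon
  have main : ∀ n : ℕ, d ^ (2 ^ n) ≤ e ^ (2 ^ n - 1) * (‖W‖ * K) := by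
    intro n
    have h := claim n 1 le_rfl
    rw [pow_one] at h
    calc d ^ 2 ^ n ≤ ‖W‖ ^ (1 * 2 ^ n) * sNormA A u ^ (2 ^ n - 1) * K := h
      _ = e ^ (2 ^ n - 1) * (‖W‖ * K) := by
          have hsplit : ‖W‖ ^ (2 ^ n) = ‖W‖ * ‖W‖ ^ (2 ^ n - 1) := by
            rw [← pow_succ']
            congr 1
            have := Nat.one_le_two_pow (n := n); omega
          rw [one_mul, hsplit, hedef, mul_pow]; ring
  rcases eq_or_lt_of_le hd with he | he
  · have h2 := main 1
    rw [← he] at h2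
    norm_num at h2
    nlinarith
  · set b : ℝ := d / e with hbdef
    have hb : 1 < b := (one_lt_div he).2 hcon
    obtain ⟨n, hn⟩ := pow_unbounded_of_one_lt ((‖W‖ * K) / e) hb
    have h1 : b ^ n ≤ b ^ (2 ^ n) := pow_le_pow_right₀ hb.le (Nat.lt_two_pow_self (n := n)).le
    have h2 : b ^ (2 ^ n) ≤ (‖W‖ * K) / e := by
      rw [hbdef, div_pow, div_le_div_iff₀ (by positivity) he]
      calc d ^ 2 ^ n * e ≤ e ^ (2 ^ n - 1) * (‖W‖ * K) * e := by
            apply mul_le_mul_of_nonneg_right (main n) he.le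
        _ = ‖W‖ * K * e ^ 2 ^ n := by
            have hsplit : e ^ (2 ^ n - 1) * e = e ^ (2 ^ n) := by
              rw [← pow_succ]
              congr 1
              have := Nat.one_le_two_pow (n := n); omega
            rw [← hsplit]; ring
    linarith [lt_of_lt_of_le hn (le_trans h1 h2)]

end AuxIter

section AuxBounds
variable {H : Type*} [NormedAddCommGroup H] [InnerProductSpace ℂ H] [CompleteSpace H]

private lemma le_of_sq_le_sq' {a b : ℝ} (ha : 0 ≤ a) (hb : 0 ≤ b) (h : a ^ 2 ≤ b ^ 2) :
    a ≤ b := by nlinarith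

private lemma hAT (A T Ts : H →L[ℂ] H) (hA : A.IsPositive) (h : A ∘L Ts = adjoint T ∘L A) :
    A ∘L T = adjoint Ts ∘L A := by
  have h2 := congrArg ContinuousLinearMap.adjoint h
  rw [ContinuousLinearMap.adjoint_comp, ContinuousLinearMap.adjoint_comp,
    ContinuousLinearMap.adjoint_adjoint, hA.isSelfAdjoint.adjoint_eq] at h2
  exact h2.symm

private lemma nA_T_le (A T Ts : H →L[ℂ] H) (hA : A.IsPositive)
    (h : A ∘L Ts = adjoint T ∘L A) (u : H) :
    sNormA A (T u) ≤ Real.sqrt ‖Ts ∘L T‖ * sNormA A u := by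
  have hat := hAT A T Ts hA h
  have hW : A ∘L (Ts ∘L T) = adjoint (Ts ∘L T) ∘L A := by
    rw [← ContinuousLinearMap.comp_assoc, h, ContinuousLinearMap.comp_assoc, hat,
      ← ContinuousLinearMap.comp_assoc, ContinuousLinearMap.adjoint_comp]
  have h1 : A (T u) = adjoint Ts (A u) := by
    have := congrArg (fun S : H →L[ℂ] H => S u) hat
    simpa using this
  have hsq : sNormA A (T u) ^ 2 ≤ ‖Ts ∘L T‖ * sNormA A u ^ 2 := by
    rw [nA_sq A hA]
    calc (inner ℂ (A (T u)) (T u) : ℂ).re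
        = (inner ℂ (A u) ((Ts ∘L T) u) : ℂ).re := by
          rw [h1, ContinuousLinearMap.adjoint_inner_left]; rfl
      _ ≤ ‖(inner ℂ (A u) ((Ts ∘L T) u) : ℂ)‖ := Complex.re_le_norm _
      _ ≤ sNormA A u * sNormA A ((Ts ∘L T) u) := csA A hA _ _
      _ ≤ sNormA A u * (‖Ts ∘L T‖ * sNormA A u) :=
          mul_le_mul_of_nonneg_left (key_bound A (Ts ∘L T) hA hW u) (nA_nonneg A u)
      _ = ‖Ts ∘L T‖ * sNormA A u ^ 2 := by ring
  apply le_of_sq_le_sq' (nA_nonneg A _) (mul_nonneg (Real.sqrt_nonneg _) (nA_nonneg A u))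
  rw [mul_pow, Real.sq_sqrt (norm_nonneg _)]
  exact hsq

private lemma nA_Ts_le (A T Ts : H →L[ℂ] H) (hA : A.IsPositive)
    (h : A ∘L Ts = adjoint T ∘L A) (u : H) :
    sNormA A (Ts u) ≤ Real.sqrt ‖T ∘L Ts‖ * sNormA A u := by
  have hat := hAT A T Ts hA h
  have hW : A ∘L (T ∘L Ts) = adjoint (T ∘L Ts) ∘L A := by
    rw [← ContinuousLinearMap.comp_assoc, hat, ContinuousLinearMap.comp_assoc, h,
      ← ContinuousLinearMap.comp_assoc, ContinuousLinearMap.adjoint_comp]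
  have h1 : A (Ts u) = adjoint T (A u) := by
    have := congrArg (fun S : H →L[ℂ] H => S u) h
    simpa using this
  have hsq : sNormA A (Ts u) ^ 2 ≤ ‖T ∘L Ts‖ * sNormA A u ^ 2 := by
    rw [nA_sq A hA]
    calc (inner ℂ (A (Ts u)) (Ts u) : ℂ).re
        = (inner ℂ (A u) ((T ∘L Ts) u) : ℂ).re := by
          rw [h1, ContinuousLinearMap.adjoint_inner_left]; rfl
      _ ≤ ‖(inner ℂ (A u) ((T ∘L Ts) u) : ℂ)‖ := Complex.re_le_norm _
      _ ≤ sNormA A u * sNormA A ((T ∘L Ts) u) := csA A hA _ _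
      _ ≤ sNormA A u * (‖T ∘L Ts‖ * sNormA A u) :=
          mul_le_mul_of_nonneg_left (key_bound A (T ∘L Ts) hA hW u) (nA_nonneg A u)
      _ = ‖T ∘L Ts‖ * sNormA A u ^ 2 := by ring
  apply le_of_sq_le_sq' (nA_nonneg A _) (mul_nonneg (Real.sqrt_nonneg _) (nA_nonneg A u))
  rw [mul_pow, Real.sq_sqrt (norm_nonneg _)]
  exact hsq

end AuxBounds

section AuxBlk
variable {H : Type*} [NormedAddCommGroup H] [InnerProductSpace ℂ H] [CompleteSpace H]

private lemma blk2_fst (X Y Z W : H →L[ℂ] H) (ξ : WithLp 2 (H × H)) :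
    (blk2 X Y Z W ξ).fst = X ξ.fst + Y ξ.snd := rfl

private lemma blk2_snd (X Y Z W : H →L[ℂ] H) (ξ : WithLp 2 (H × H)) :
    (blk2 X Y Z W ξ).snd = Z ξ.fst + W ξ.snd := rfl

private lemma sInnerA_blk (A : H →L[ℂ] H) (ξ η : WithLp 2 (H × H)) :
    sInnerA (blk2 A 0 0 A) ξ η
      = inner ℂ (A ξ.fst) η.fst + inner ℂ (A ξ.snd) η.snd := by
  rw [sInnerA, WithLp.prod_inner_apply]
  show inner ℂ (A ξ.fst + (0 : H →L[ℂ] H) ξ.snd) η.fst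
    + inner ℂ ((0 : H →L[ℂ] H) ξ.fst + A ξ.snd) η.snd = _
  simp

end AuxBlk

section AuxWit
variable {H : Type*} [NormedAddCommGroup H] [InnerProductSpace ℂ H] [CompleteSpace H]

private lemma mk_fst (a b : H) :
    ((WithLp.prodContinuousLinearEquiv 2 ℂ H H).symm (a, b)).fst = a := rfl

private lemma mk_snd (a b : H) :
    ((WithLp.prodContinuousLinearEquiv 2 ℂ H H).symm (a, b)).snd = b := rfl

private lemma wA_nonneg {E : Type*} [NormedAddCommGroup E] [InnerProductSpace ℂ E]
    (A T : E →L[ℂ] E) : 0 ≤ wA A T := by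
  apply Real.sSup_nonneg
  rintro r ⟨x, -, rfl⟩
  exact norm_nonneg _

private lemma le_wA {E : Type*} [NormedAddCommGroup E] [InnerProductSpace ℂ E]
    (A T : E →L[ℂ] E) (B : ℝ)
    (hB : ∀ ξ, sNormA A ξ = 1 → ‖sInnerA A (T ξ) ξ‖ ≤ B)
    (x : E) (hx : sNormA A x = 1) :
    ‖sInnerA A (T x) x‖ ≤ wA A T := by
  apply le_csSup
  · refine ⟨B, ?_⟩
    rintro r ⟨ξ, hξ, rfl⟩
    exact hB ξ hξ
  · exact ⟨x, hx, rfl⟩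

private lemma wA_le {E : Type*} [NormedAddCommGroup E] [InnerProductSpace ℂ E]
    (A T : E →L[ℂ] E) (B : ℝ) (hB0 : 0 ≤ B)
    (hB : ∀ x, sNormA A x = 1 → ‖sInnerA A (T x) x‖ ≤ B) :
    wA A T ≤ B := by
  apply Real.sSup_le _ hB0
  rintro r ⟨x, hx, rfl⟩
  exact hB x hx

private lemma witness_val1 (A X Y : H →L[ℂ] H) (x : H) (μ ν : ℂ) :
    sInnerA (blk2 A 0 0 A)
      ((blk2 X Y 0 0) ((WithLp.prodContinuousLinearEquiv 2 ℂ H H).symm (μ • x, ν • x)))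
      ((WithLp.prodContinuousLinearEquiv 2 ℂ H H).symm (μ • x, ν • x))
      = μ * ((starRingEnd ℂ) μ * inner ℂ (A (X x)) x + (starRingEnd ℂ) ν * inner ℂ (A (Y x)) x) := by
  rw [sInnerA_blk, blk2_fst, blk2_snd, mk_fst, mk_snd]
  simp only [map_smul, map_add, ContinuousLinearMap.zero_apply, add_zero, map_zero,
    inner_zero_left, inner_add_left, inner_smul_left, inner_smul_right, zero_add]
  ring

private lemma witness_val2 (A X Y : H →L[ℂ] H) (x : H) (μ ν : ℂ) :
    sInnerA (blk2 A 0 0 A)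
      ((blk2 0 X Y 0) ((WithLp.prodContinuousLinearEquiv 2 ℂ H H).symm (μ • x, ν • x)))
      ((WithLp.prodContinuousLinearEquiv 2 ℂ H H).symm (μ • x, ν • x))
      = (starRingEnd ℂ) ν * μ * inner ℂ (A (X x)) x
        + (starRingEnd ℂ) μ * ν * inner ℂ (A (Y x)) x := by
  rw [sInnerA_blk, blk2_fst, blk2_snd, mk_fst, mk_snd]
  simp only [map_smul, map_add, ContinuousLinearMap.zero_apply, add_zero, map_zero,
    inner_zero_left, inner_add_left, inner_smul_left, inner_smul_right, zero_add]
  ring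

private lemma witness_norm (A : H →L[ℂ] H) (hA : A.IsPositive) (x : H)
    (hx : sNormA A x = 1) (μ ν : ℂ) (hμν : ‖μ‖ ^ 2 + ‖ν‖ ^ 2 = 1) :
    sNormA (blk2 A 0 0 A)
      ((WithLp.prodContinuousLinearEquiv 2 ℂ H H).symm (μ • x, ν • x)) = 1 := by
  have hz : (inner ℂ (A x) x : ℂ).re = 1 := by
    rw [← nA_sq A hA, hx]; norm_num
  rw [sNormA, sInnerA_blk, mk_fst, mk_snd]
  have h1 : (inner ℂ (A (μ • x)) (μ • x) : ℂ) = ((‖μ‖ ^ 2 : ℝ) : ℂ) * inner ℂ (A x) x := by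
    rw [map_smul, inner_smul_left, inner_smul_right, ← mul_assoc]
    congr 1
    rw [mul_comm, Complex.mul_conj, Complex.normSq_eq_norm_sq]
  have h2 : (inner ℂ (A (ν • x)) (ν • x) : ℂ) = ((‖ν‖ ^ 2 : ℝ) : ℂ) * inner ℂ (A x) x := by
    rw [map_smul, inner_smul_left, inner_smul_right, ← mul_assoc]
    congr 1
    rw [mul_comm, Complex.mul_conj, Complex.normSq_eq_norm_sq]
  rw [h1, h2, Complex.add_re, Complex.re_ofReal_mul, Complex.re_ofReal_mul, hz]
  rw [mul_one, mul_one, hμν, Real.sqrt_one]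

end AuxWit

set_option maxHeartbeats 1600000

theorem stmt11 {H : Type*} [NormedAddCommGroup H] [InnerProductSpace ℂ H] [CompleteSpace H]
    (A : H →L[ℂ] H) (hA : A.IsPositive)
    (T Ts : H →L[ℂ] H) (hT : memBA A T) (hTs : IsSharpA A T Ts) :
    (1 / 2) * wA A T ≤
      min (wA (blk2 A 0 0 A) (blk2 ((2 : ℂ)⁻¹ • (T + Ts)) ((2 * Complex.I)⁻¹ • (T - Ts)) 0 0))
        (wA (blk2 A 0 0 A) (blk2 0 ((2 : ℂ)⁻¹ • (T + Ts)) ((2 * Complex.I)⁻¹ • (T - Ts)) 0)) := by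
  obtain ⟨hTs1, -⟩ := hTs
  set P : H →L[ℂ] H := (2 : ℂ)⁻¹ • (T + Ts) with hPdef
  set Q : H →L[ℂ] H := (2 * Complex.I)⁻¹ • (T - Ts) with hQdef
  clear_value P Q
  set C0 : ℝ := Real.sqrt ‖Ts ∘L T‖ + Real.sqrt ‖T ∘L Ts‖ with hC0def
  clear_value C0
  have hC0 : 0 ≤ C0 := by
    rw [hC0def]; positivity
  have hhalf : ‖(2 : ℂ)⁻¹‖ = 1 / 2 := by norm_num
  have hhalfI : ‖(2 * Complex.I)⁻¹‖ = 1 / 2 := by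
    rw [norm_inv, norm_mul, Complex.norm_I, mul_one]; norm_num
  have hsum : ∀ v, sNormA A (T v) + sNormA A (Ts v) ≤ C0 * sNormA A v := by
    intro v
    have h1 := nA_T_le A T Ts hA hTs1 v
    have h2 := nA_Ts_le A T Ts hA hTs1 v
    rw [hC0def]; nlinarith [nA_nonneg A v]
  have hnP : ∀ v, sNormA A (P v) ≤ C0 / 2 * sNormA A v := by
    intro v
    have h1 : P v = (2 : ℂ)⁻¹ • (T v + Ts v) := by
      rw [hPdef]; simp
    rw [h1, nA_smul, hhalf]
    have h2 := nA_add A hA (T v) (Ts v)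
    have h3 := hsum v
    linarith
  have hnQ : ∀ v, sNormA A (Q v) ≤ C0 / 2 * sNormA A v := by
    intro v
    have h1 : Q v = (2 * Complex.I)⁻¹ • (T v - Ts v) := by
      rw [hQdef]; simp
    rw [h1, nA_smul, hhalfI]
    have hneg : sNormA A (-(Ts v)) = sNormA A (Ts v) := by
      have h4 := nA_smul A (-1 : ℂ) (Ts v)
      simpa using h4
    have h2 : sNormA A (T v - Ts v) ≤ sNormA A (T v) + sNormA A (Ts v) := by
      calc sNormA A (T v - Ts v) = sNormA A (T v + -(Ts v)) := by rw [sub_eq_add_neg]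
        _ ≤ sNormA A (T v) + sNormA A (-(Ts v)) := nA_add A hA _ _
        _ = sNormA A (T v) + sNormA A (Ts v) := by rw [hneg]
    have h3 := hsum v
    linarith
  -- projections of a unit vector
  have hproj : ∀ ξ : WithLp 2 (H × H), sNormA (blk2 A 0 0 A) ξ = 1 →
      sNormA A ξ.fst ≤ 1 ∧ sNormA A ξ.snd ≤ 1 := by
    intro ξ hξ
    have hnn1 : 0 ≤ (inner ℂ (A ξ.fst) ξ.fst : ℂ).re := hA.2 ξ.fst
    have hnn2 : 0 ≤ (inner ℂ (A ξ.snd) ξ.snd : ℂ).re := hA.2 ξ.snd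
    have h0 : Real.sqrt ((inner ℂ (A ξ.fst) ξ.fst : ℂ).re + (inner ℂ (A ξ.snd) ξ.snd : ℂ).re) = 1 := by
      rw [sNormA, sInnerA_blk, Complex.add_re] at hξ
      exact hξ
    have h1 : (inner ℂ (A ξ.fst) ξ.fst : ℂ).re + (inner ℂ (A ξ.snd) ξ.snd : ℂ).re = 1 := by
      have := Real.sq_sqrt (add_nonneg hnn1 hnn2)
      rw [h0] at this
      nlinarith
    constructor
    · apply le_of_sq_le_sq' (nA_nonneg A _) zero_le_one
      rw [nA_sq A hA]
      nlinarith
    · apply le_of_sq_le_sq' (nA_nonneg A _) zero_le_one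
      rw [nA_sq A hA]
      nlinarith
  -- uniform bounds on the numerical-radius sets of the two block matrices
  have hBnd1 : ∀ ξ, sNormA (blk2 A 0 0 A) ξ = 1 →
      ‖sInnerA (blk2 A 0 0 A) ((blk2 P Q 0 0) ξ) ξ‖ ≤ C0 := by
    intro ξ hξ
    obtain ⟨hf, hs⟩ := hproj ξ hξ
    rw [sInnerA_blk, blk2_fst, blk2_snd]
    simp only [ContinuousLinearMap.zero_apply, add_zero, map_zero, inner_zero_left, map_add,
      inner_add_left]
    have c1 : ‖inner ℂ (A (P ξ.fst)) ξ.fst‖ ≤ C0 / 2 := by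
      calc ‖(inner ℂ (A (P ξ.fst)) ξ.fst : ℂ)‖ ≤ sNormA A (P ξ.fst) * sNormA A ξ.fst :=
            csA A hA _ _
        _ ≤ C0 / 2 := by
            have b1 := hnP ξ.fst
            have b2 := nA_nonneg A (P ξ.fst)
            have b3 := nA_nonneg A ξ.fst
            nlinarith
    have c2 : ‖inner ℂ (A (Q ξ.snd)) ξ.fst‖ ≤ C0 / 2 := by
      calc ‖(inner ℂ (A (Q ξ.snd)) ξ.fst : ℂ)‖ ≤ sNormA A (Q ξ.snd) * sNormA A ξ.fst :=
            csA A hA _ _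
        _ ≤ C0 / 2 := by
            have b1 := hnQ ξ.snd
            have b2 := nA_nonneg A (Q ξ.snd)
            have b3 := nA_nonneg A ξ.fst
            have b4 := nA_nonneg A ξ.snd
            nlinarith
    calc ‖inner ℂ (A (P ξ.fst)) ξ.fst + inner ℂ (A (Q ξ.snd)) ξ.fst‖
        ≤ ‖inner ℂ (A (P ξ.fst)) ξ.fst‖ + ‖inner ℂ (A (Q ξ.snd)) ξ.fst‖ :=
          norm_add_le _ _
      _ ≤ C0 := by linarith
  have hBnd2 : ∀ ξ, sNormA (blk2 A 0 0 A) ξ = 1 →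
      ‖sInnerA (blk2 A 0 0 A) ((blk2 0 P Q 0) ξ) ξ‖ ≤ C0 := by
    intro ξ hξ
    obtain ⟨hf, hs⟩ := hproj ξ hξ
    rw [sInnerA_blk, blk2_fst, blk2_snd]
    simp only [ContinuousLinearMap.zero_apply, zero_add, add_zero, map_zero, inner_zero_left,
      map_add, inner_add_left]
    have c1 : ‖inner ℂ (A (P ξ.snd)) ξ.fst‖ ≤ C0 / 2 := by
      calc ‖(inner ℂ (A (P ξ.snd)) ξ.fst : ℂ)‖ ≤ sNormA A (P ξ.snd) * sNormA A ξ.fst :=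
            csA A hA _ _
        _ ≤ C0 / 2 := by
            have b1 := hnP ξ.snd
            have b2 := nA_nonneg A (P ξ.snd)
            have b3 := nA_nonneg A ξ.fst
            have b4 := nA_nonneg A ξ.snd
            nlinarith
    have c2 : ‖inner ℂ (A (Q ξ.fst)) ξ.snd‖ ≤ C0 / 2 := by
      calc ‖(inner ℂ (A (Q ξ.fst)) ξ.snd : ℂ)‖ ≤ sNormA A (Q ξ.fst) * sNormA A ξ.snd :=
            csA A hA _ _
        _ ≤ C0 / 2 := by
            have b1 := hnQ ξ.fst
            have b2 := nA_nonneg A (Q ξ.fst)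
            have b3 := nA_nonneg A ξ.fst
            have b4 := nA_nonneg A ξ.snd
            nlinarith
    calc ‖inner ℂ (A (P ξ.snd)) ξ.fst + inner ℂ (A (Q ξ.fst)) ξ.snd‖
        ≤ ‖inner ℂ (A (P ξ.snd)) ξ.fst‖ + ‖inner ℂ (A (Q ξ.fst)) ξ.snd‖ :=
          norm_add_le _ _
      _ ≤ C0 := by linarith
  -- the square-root-of-two scalar
  set c : ℂ := ((Real.sqrt 2 : ℝ) : ℂ)⁻¹ with hcdef
  clear_value c
  have hσ : ((Real.sqrt 2 : ℝ) : ℂ) ^ 2 = 2 := by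
    norm_cast
    rw [Real.sq_sqrt]; norm_num
  have hσne : ((Real.sqrt 2 : ℝ) : ℂ) ≠ 0 := by
    simp only [ne_eq, Complex.ofReal_eq_zero]
    positivity
  have hcc : (starRingEnd ℂ) c = c := by rw [hcdef, map_inv₀, Complex.conj_ofReal]
  have hc2 : c * c = 2⁻¹ := by
    rw [hcdef, ← mul_inv, ← sq, hσ]
  have hnc : ‖c‖ ^ 2 = 1 / 2 := by
    rw [hcdef, norm_inv, inv_pow, Complex.norm_real, Real.norm_eq_abs,
      abs_of_nonneg (Real.sqrt_nonneg _), Real.sq_sqrt (by norm_num : (0:ℝ) ≤ 2)]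
    norm_num
  have hncI : ‖c * Complex.I‖ ^ 2 = 1 / 2 := by
    rw [norm_mul, Complex.norm_I, mul_one, hnc]
  -- main bound for each unit vector x
  have hkey : ∀ x : H, sNormA A x = 1 →
      ‖sInnerA A (T x) x‖ ≤
        2 * min (wA (blk2 A 0 0 A) (blk2 P Q 0 0)) (wA (blk2 A 0 0 A) (blk2 0 P Q 0)) := by
    intro x hx
    show ‖inner ℂ (A (T x)) x‖ ≤ _
    set z : ℂ := inner ℂ (A (T x)) x with hzdef
    set w : ℂ := inner ℂ (A (Ts x)) x with hwdef
    have hw : w = (starRingEnd ℂ) z := by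
      have h1 : A (Ts x) = adjoint T (A x) := by
        have := congrArg (fun S : H →L[ℂ] H => S x) hTs1
        simpa using this
      have h2 : (starRingEnd ℂ) z = inner ℂ x (A (T x)) := by
        rw [hzdef]; exact inner_conj_symm x (A (T x))
      have h3 : (inner ℂ x (A (T x)) : ℂ) = inner ℂ (A x) (T x) := by
        rw [← ContinuousLinearMap.adjoint_inner_left A (T x) x, hA.isSelfAdjoint.adjoint_eq]
      have h4 : w = inner ℂ (A x) (T x) := by
        rw [hwdef, h1, ContinuousLinearMap.adjoint_inner_left]
      rw [h4, h2, h3]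
    have haP : (inner ℂ (A (P x)) x : ℂ) = ((z.re : ℝ) : ℂ) := by
      have h1 : P x = (2 : ℂ)⁻¹ • (T x + Ts x) := by rw [hPdef]; simp
      rw [h1, map_smul, inner_smul_left, map_add, inner_add_left, ← hzdef, ← hwdef, hw]
      rw [Complex.add_conj]
      simp only [map_inv₀, map_ofNat]
      push_cast
      ring
    have haQ : (inner ℂ (A (Q x)) x : ℂ) = ((-z.im : ℝ) : ℂ) := by
      have h1 : Q x = (2 * Complex.I)⁻¹ • (T x - Ts x) := by rw [hQdef]; simp
      rw [h1, map_smul, inner_smul_left, map_sub, inner_sub_left, ← hzdef, ← hwdef, hw]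
      rw [Complex.sub_conj]
      simp only [map_inv₀, map_mul, Complex.conj_I, map_ofNat]
      rw [show (2 : ℂ) * -Complex.I = -(2 * Complex.I) by ring, inv_neg, Complex.ofReal_neg]
      rw [show ((2 : ℂ) * Complex.I)⁻¹ = 2⁻¹ * Complex.I⁻¹ by rw [mul_inv], Complex.inv_I]
      ring_nf
      rw [Complex.I_sq]
      push_cast
      ring
    -- first block matrix
    have hterm1 : ‖z‖ ≤
        2 * wA (blk2 A 0 0 A) (blk2 P Q 0 0) := by
      have hξn : sNormA (blk2 A 0 0 A)
          ((WithLp.prodContinuousLinearEquiv 2 ℂ H H).symm (c • x, (c * Complex.I) • x)) = 1 :=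
        witness_norm A hA x hx c (c * Complex.I) (by rw [hnc, hncI]; norm_num)
      have hval := witness_val1 A P Q x c (c * Complex.I)
      rw [haP, haQ] at hval
      have hval2 : sInnerA (blk2 A 0 0 A)
          ((blk2 P Q 0 0) ((WithLp.prodContinuousLinearEquiv 2 ℂ H H).symm
            (c • x, (c * Complex.I) • x)))
          ((WithLp.prodContinuousLinearEquiv 2 ℂ H H).symm (c • x, (c * Complex.I) • x))
          = 2⁻¹ * z := by
        rw [hval, map_mul, hcc, Complex.conj_I]
        have : c * (c * ((z.re : ℝ) : ℂ) + c * -Complex.I * ((-z.im : ℝ) : ℂ))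
            = (c * c) * (((z.re : ℝ) : ℂ) + Complex.I * ((z.im : ℝ) : ℂ)) := by
          push_cast
          ring
        rw [this, hc2]
        congr 1
        rw [mul_comm Complex.I _]
        exact Complex.re_add_im z
      have hmem := le_wA (blk2 A 0 0 A) (blk2 P Q 0 0) C0 hBnd1 _ hξn
      rw [hval2] at hmem
      have habs : ‖2⁻¹ * z‖ = 2⁻¹ * ‖z‖ := by
        rw [norm_mul]
        norm_num
      rw [habs] at hmem
      linarith
    -- second block matrix
    have hterm2 : ‖z‖ ≤
        2 * wA (blk2 A 0 0 A) (blk2 0 P Q 0) := by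
      have hξn1 : sNormA (blk2 A 0 0 A)
          ((WithLp.prodContinuousLinearEquiv 2 ℂ H H).symm (c • x, c • x)) = 1 :=
        witness_norm A hA x hx c c (by rw [hnc]; norm_num)
      have hξn2 : sNormA (blk2 A 0 0 A)
          ((WithLp.prodContinuousLinearEquiv 2 ℂ H H).symm (c • x, (c * Complex.I) • x)) = 1 :=
        witness_norm A hA x hx c (c * Complex.I) (by rw [hnc, hncI]; norm_num)
      have hv1 := witness_val2 A P Q x c c
      rw [haP, haQ] at hv1
      have hv1' : sInnerA (blk2 A 0 0 A)
          ((blk2 0 P Q 0) ((WithLp.prodContinuousLinearEquiv 2 ℂ H H).symm (c • x, c • x)))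
          ((WithLp.prodContinuousLinearEquiv 2 ℂ H H).symm (c • x, c • x))
          = 2⁻¹ * (((z.re : ℝ) : ℂ) + ((-z.im : ℝ) : ℂ)) := by
        rw [hv1, hcc, ← hc2]
        ring
      have hv2 := witness_val2 A P Q x c (c * Complex.I)
      rw [haP, haQ] at hv2
      have hv2' : sInnerA (blk2 A 0 0 A)
          ((blk2 0 P Q 0) ((WithLp.prodContinuousLinearEquiv 2 ℂ H H).symm
            (c • x, (c * Complex.I) • x)))
          ((WithLp.prodContinuousLinearEquiv 2 ℂ H H).symm (c • x, (c * Complex.I) • x))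
          = 2⁻¹ * (Complex.I * (((-z.im : ℝ) : ℂ) - ((z.re : ℝ) : ℂ))) := by
        rw [hv2, map_mul, hcc, Complex.conj_I]
        have : c * -Complex.I * c * ((z.re : ℝ) : ℂ) + c * (c * Complex.I) * ((-z.im : ℝ) : ℂ)
            = (c * c) * (Complex.I * (((-z.im : ℝ) : ℂ) - ((z.re : ℝ) : ℂ))) := by ring
        rw [this, hc2]
      have hm1 := le_wA (blk2 A 0 0 A) (blk2 0 P Q 0) C0 hBnd2 _ hξn1
      have hm2 := le_wA (blk2 A 0 0 A) (blk2 0 P Q 0) C0 hBnd2 _ hξn2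
      rw [hv1'] at hm1
      rw [hv2'] at hm2
      have e1 : ((z.re : ℝ) : ℂ) + ((-z.im : ℝ) : ℂ) = (((z.re - z.im : ℝ)) : ℂ) := by
        push_cast; ring
      have e2 : ((-z.im : ℝ) : ℂ) - ((z.re : ℝ) : ℂ) = ((-(z.re + z.im) : ℝ) : ℂ) := by
        push_cast; ring
      have habs1 : ‖2⁻¹ * (((z.re : ℝ) : ℂ) + ((-z.im : ℝ) : ℂ))‖
          = 2⁻¹ * |z.re - z.im| := by
        rw [e1, norm_mul, Complex.norm_real, Real.norm_eq_abs]
        norm_num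
      have habs2 : ‖2⁻¹ * (Complex.I * (((-z.im : ℝ) : ℂ) - ((z.re : ℝ) : ℂ)))‖
          = 2⁻¹ * |z.re + z.im| := by
        rw [e2, norm_mul, norm_mul, Complex.norm_I, Complex.norm_real, Real.norm_eq_abs, abs_neg]
        norm_num
      rw [habs1] at hm1
      rw [habs2] at hm2
      have hmax : ‖z‖ ≤ max (|z.re - z.im|) (|z.re + z.im|) := by
        apply le_of_sq_le_sq' (norm_nonneg _)
          ((abs_nonneg _).trans (le_max_left _ _))
        rw [Complex.sq_norm, Complex.normSq_apply]
        rcases le_total (|z.re - z.im|) (|z.re + z.im|) with h | h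
        · rw [max_eq_right h]
          nlinarith [mul_self_le_mul_self (abs_nonneg (z.re - z.im)) h,
            sq_abs (z.re - z.im), sq_abs (z.re + z.im), abs_nonneg (z.re - z.im),
            abs_nonneg (z.re + z.im)]
        · rw [max_eq_left h]
          nlinarith [mul_self_le_mul_self (abs_nonneg (z.re + z.im)) h,
            sq_abs (z.re - z.im), sq_abs (z.re + z.im), abs_nonneg (z.re - z.im),
            abs_nonneg (z.re + z.im)]
      rcases max_cases (|z.re - z.im|) (|z.re + z.im|) with ⟨hm, -⟩ | ⟨hm, -⟩ <;>
        rw [hm] at hmax <;> linarith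
    rcases min_cases (wA (blk2 A 0 0 A) (blk2 P Q 0 0))
        (wA (blk2 A 0 0 A) (blk2 0 P Q 0)) with ⟨hm, -⟩ | ⟨hm, -⟩ <;> rw [hm] <;> linarith
  -- conclude
  have hw1 := wA_nonneg (blk2 A 0 0 A) (blk2 P Q 0 0)
  have hw2 := wA_nonneg (blk2 A 0 0 A) (blk2 0 P Q 0)
  have hmin : 0 ≤ min (wA (blk2 A 0 0 A) (blk2 P Q 0 0)) (wA (blk2 A 0 0 A) (blk2 0 P Q 0)) :=
    le_min hw1 hw2
  have hfinal : wA A T ≤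
      2 * min (wA (blk2 A 0 0 A) (blk2 P Q 0 0)) (wA (blk2 A 0 0 A) (blk2 0 P Q 0)) :=
    wA_le A T _ (by linarith) hkey
  linarith
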